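/- Let (X, 𝒰) be a Hausdorff uniform space without isolated points and (X, f_{1,∞}) a periodic non-autonomous system with induced map g such that (X, g) has a transitive point. If the set of equicontinuity points of (X, f_{1,∞}) is nonempty, then every transitive point of (X, f_{1,∞}) is an equicontinuity point. -/

import Mathlib

open Topology Filter Set
open scoped Uniformity

/-- `traj f n = f_n ∘ ⋯ ∘ f_1` (and `traj f 0 = id`), i.e. `f_1^n`. -/
def traj {X : Type*} (f : ℕ → X → X) : ℕ → X → X
  | 0 => id
  | n + 1 => f (n + 1) ∘ traj f n

/-- The family `f` is periodic with period `p`. -/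
def PeriodicFam {X : Type*} (f : ℕ → X → X) (p : ℕ) : Prop :=
  ∀ n, f (n + p) = f n

/-- A set of naturals is thick: it contains arbitrarily long blocks of consecutive integers. -/
def Thick (T : Set ℕ) : Prop :=
  ∀ k : ℕ, ∃ n : ℕ, ∀ i ≤ k, n + i ∈ T

/-- A set of naturals is syndetic: it has bounded gaps. -/
def Syndetic (S : Set ℕ) : Prop :=
  ∃ M : ℕ, ∀ n : ℕ, ∃ m ∈ S, n ≤ m ∧ m ≤ n + M

/-- `x` is a transitive point of the non-autonomous system `(X, f_{1,∞})`. -/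
def TransPt {X : Type*} [TopologicalSpace X] (f : ℕ → X → X) (x : X) : Prop :=
  Dense (Set.range fun n => traj f n x)

/-- `x` is a transitive point of the autonomous system `(X, g)`. -/
def TransPtAut {X : Type*} [TopologicalSpace X] (g : X → X) (x : X) : Prop :=
  Dense (Set.range fun n => g^[n] x)

/-- `x` is an equicontinuity point of `(X, f_{1,∞})` on a uniform space. -/
def EqPt {X : Type*} [UniformSpace X] (f : ℕ → X → X) (x : X) : Prop :=
  ∀ E ∈ 𝓤 X, ∃ D ∈ 𝓤 X, ∀ y : X, (x, y) ∈ D → ∀ n : ℕ, (traj f n x, traj f n y) ∈ E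

/-- `x` is a syndetically equicontinuous point of `(X, f_{1,∞})`. -/
def SynEqPt {X : Type*} [UniformSpace X] (f : ℕ → X → X) (x : X) : Prop :=
  ∀ E ∈ 𝓤 X, ∃ U ∈ 𝓝 x,
    Syndetic {n : ℕ | ∀ x₁ ∈ U, ∀ x₂ ∈ U, (traj f n x₁, traj f n x₂) ∈ E}

/-- `x` is a syndetically equicontinuous point of the autonomous system `(X, g)`. -/
def SynEqPtAut {X : Type*} [UniformSpace X] (g : X → X) (x : X) : Prop :=
  ∀ E ∈ 𝓤 X, ∃ U ∈ 𝓝 x,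
    Syndetic {n : ℕ | ∀ x₁ ∈ U, ∀ x₂ ∈ U, (g^[n] x₁, g^[n] x₂) ∈ E}

/-- `N(U, D)` for the non-autonomous system. -/
def NSet {X : Type*} (f : ℕ → X → X) (U : Set X) (D : Set (X × X)) : Set ℕ :=
  {n : ℕ | 0 < n ∧ ∃ x ∈ U, ∃ y ∈ U, (traj f n x, traj f n y) ∉ D}

/-- `N(U, D)` for the autonomous system. -/
def NSetAut {X : Type*} (g : X → X) (U : Set X) (D : Set (X × X)) : Set ℕ :=
  {n : ℕ | 0 < n ∧ ∃ x ∈ U, ∃ y ∈ U, (g^[n] x, g^[n] y) ∉ D}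

/-- Sensitivity of `(X, f_{1,∞})`. -/
def Sensitive {X : Type*} [UniformSpace X] (f : ℕ → X → X) : Prop :=
  ∃ D ∈ 𝓤 X, ∀ U : Set X, IsOpen U → U.Nonempty → (NSet f U D).Nonempty

/-- Thick sensitivity of `(X, f_{1,∞})`. -/
def ThickSensitive {X : Type*} [UniformSpace X] (f : ℕ → X → X) : Prop :=
  ∃ D ∈ 𝓤 X, ∀ U : Set X, IsOpen U → U.Nonempty → Thick (NSet f U D)

/-- Thick sensitivity of the autonomous system `(X, g)`. -/
def ThickSensitiveAut {X : Type*} [UniformSpace X] (g : X → X) : Prop :=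
  ∃ D ∈ 𝓤 X, ∀ U : Set X, IsOpen U → U.Nonempty → Thick (NSetAut g U D)

/-- Multi-sensitivity of `(X, f_{1,∞})`. -/
def MultiSensitive {X : Type*} [UniformSpace X] (f : ℕ → X → X) : Prop :=
  ∃ D ∈ 𝓤 X, ∀ (k : ℕ) (U : Fin (k + 1) → Set X),
    (∀ i, IsOpen (U i)) → (∀ i, (U i).Nonempty) → (⋂ i, NSet f (U i) D).Nonempty

/-- Multi-sensitivity of the autonomous system `(X, g)`. -/
def MultiSensitiveAut {X : Type*} [UniformSpace X] (g : X → X) : Prop :=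
  ∃ D ∈ 𝓤 X, ∀ (k : ℕ) (U : Fin (k + 1) → Set X),
    (∀ i, IsOpen (U i)) → (∀ i, (U i).Nonempty) → (⋂ i, NSetAut g (U i) D).Nonempty

/-- Eventual sensitivity of `(X, f_{1,∞})` with a given entourage `D`. -/
def EvSensitiveWith {X : Type*} [UniformSpace X] (f : ℕ → X → X) (D : Set (X × X)) : Prop :=
  ∀ x : X, ∀ E ∈ 𝓤 X, ∃ n k : ℕ, 0 < n ∧ 0 < k ∧
    ∃ y : X, (traj f n x, y) ∈ E ∧ (traj f (n + k) x, traj f k y) ∉ D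

/-- Eventual sensitivity of `(X, f_{1,∞})`. -/
def EvSensitive {X : Type*} [UniformSpace X] (f : ℕ → X → X) : Prop :=
  ∃ D ∈ 𝓤 X, EvSensitiveWith f D

/-- Eventual sensitivity of the autonomous system `(X, g)` with entourage `D`. -/
def EvSensitiveAutWith {X : Type*} [UniformSpace X] (g : X → X) (D : Set (X × X)) : Prop :=
  ∀ x : X, ∀ E ∈ 𝓤 X, ∃ q k : ℕ, 0 < q ∧ 0 < k ∧
    ∃ y : X, (g^[q] x, y) ∈ E ∧ (g^[q + k] x, g^[k] y) ∉ D

/-- `(x, y)` is a (topological) equicontinuity pair for `(X, f_{1,∞})`. -/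
def EqPair {X : Type*} [TopologicalSpace X] (f : ℕ → X → X) (x y : X) : Prop :=
  ∀ O ∈ 𝓝 y, ∃ U ∈ 𝓝 x, ∃ V ∈ 𝓝 y, ∀ n : ℕ, 0 < n →
    ((traj f n '' U) ∩ V).Nonempty → traj f n '' U ⊆ O

/-- `(x, y)` is a syndetic equicontinuity pair for `(X, f_{1,∞})`. -/
def SynEqPair {X : Type*} [TopologicalSpace X] (f : ℕ → X → X) (x y : X) : Prop :=
  ∀ O ∈ 𝓝 y, ∃ U ∈ 𝓝 x, ∃ V ∈ 𝓝 y,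
    Syndetic {n : ℕ | ((traj f n '' U) ∩ V).Nonempty → traj f n '' U ⊆ O}

/-- `O` is a splitting neighborhood of `y` with respect to `x`. -/
def SplittingNbhd {X : Type*} [TopologicalSpace X] (f : ℕ → X → X) (x y : X) (O : Set X) :
    Prop :=
  O ∈ 𝓝 y ∧ ∀ U ∈ 𝓝 x, ∀ V ∈ 𝓝 y, ∃ n : ℕ, 0 < n ∧
    ((traj f n '' U) ∩ V).Nonempty ∧ ¬ traj f n '' U ⊆ O

/-- A finite open cover of `X`. -/
def IsFinOpenCover {X : Type*} [TopologicalSpace X] (𝒰 : Finset (Set X)) : Prop :=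
  (∀ U ∈ 𝒰, IsOpen U) ∧ ⋃₀ (↑𝒰 : Set (Set X)) = Set.univ

/-- `N(V, 𝒰)`: times at which `f_1^n(V)` is not contained in any single member of `𝒰`. -/
def HNSet {X : Type*} (f : ℕ → X → X) (V : Set X) (𝒰 : Finset (Set X)) : Set ℕ :=
  {n : ℕ | 0 < n ∧ ∀ U ∈ 𝒰, ¬ traj f n '' V ⊆ U}

/-- `N(V, 𝒰)` for the autonomous system. -/
def HNSetAut {X : Type*} (g : X → X) (V : Set X) (𝒰 : Finset (Set X)) : Set ℕ :=
  {n : ℕ | 0 < n ∧ ∀ U ∈ 𝒰, ¬ g^[n] '' V ⊆ U}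

/-- Hausdorff sensitivity of `(X, f_{1,∞})`. -/
def HSensitive {X : Type*} [TopologicalSpace X] (f : ℕ → X → X) : Prop :=
  ∃ 𝒰 : Finset (Set X), IsFinOpenCover 𝒰 ∧
    ∀ V : Set X, IsOpen V → V.Nonempty → (HNSet f V 𝒰).Nonempty

/-- Hausdorff sensitivity of the autonomous system `(X, g)`. -/
def HSensitiveAut {X : Type*} [TopologicalSpace X] (g : X → X) : Prop :=
  ∃ 𝒰 : Finset (Set X), IsFinOpenCover 𝒰 ∧
    ∀ V : Set X, IsOpen V → V.Nonempty → (HNSetAut g V 𝒰).Nonempty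

/-- Thick Hausdorff sensitivity of `(X, f_{1,∞})`. -/
def ThickHSensitive {X : Type*} [TopologicalSpace X] (f : ℕ → X → X) : Prop :=
  ∃ 𝒰 : Finset (Set X), IsFinOpenCover 𝒰 ∧
    ∀ V : Set X, IsOpen V → V.Nonempty → Thick (HNSet f V 𝒰)

/-- Thick Hausdorff sensitivity of the autonomous system `(X, g)`. -/
def ThickHSensitiveAut {X : Type*} [TopologicalSpace X] (g : X → X) : Prop :=
  ∃ 𝒰 : Finset (Set X), IsFinOpenCover 𝒰 ∧
    ∀ V : Set X, IsOpen V → V.Nonempty → Thick (HNSetAut g V 𝒰)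

/-- Multi-Hausdorff sensitivity of the autonomous system `(X, g)`. -/
def MultiHSensitiveAut {X : Type*} [TopologicalSpace X] (g : X → X) : Prop :=
  ∃ 𝒰 : Finset (Set X), IsFinOpenCover 𝒰 ∧
    ∀ (m : ℕ) (V : Fin (m + 1) → Set X),
      (∀ i, IsOpen (V i)) → (∀ i, (V i).Nonempty) → (⋂ i, HNSetAut g (V i) 𝒰).Nonempty

section TransEqAuxSection

open UniformSpace
open scoped SetRel

variable {X : Type*}

/-- Partial trajectory starting after time `r`: `ptraj f r n = f (r+n) ∘ ⋯ ∘ f (r+1)`. -/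
def ptraj (f : ℕ → X → X) (r : ℕ) : ℕ → X → X
  | 0 => id
  | n + 1 => fun y => f (r + n + 1) (ptraj f r n y)

lemma traj_cont [TopologicalSpace X] {f : ℕ → X → X} (hf : ∀ n, Continuous (f n)) :
    ∀ j, Continuous (traj f j)
  | 0 => continuous_id
  | (j + 1) => (hf (j + 1)).comp (traj_cont hf j)

lemma ptraj_cont [TopologicalSpace X] {f : ℕ → X → X} (hf : ∀ n, Continuous (f n)) (r : ℕ) :
    ∀ j, Continuous (ptraj f r j)
  | 0 => continuous_id
  | (j + 1) => (hf (r + j + 1)).comp (ptraj_cont hf r j)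

lemma traj_add_S (f : ℕ → X → X) (m : ℕ) :
    ∀ n y, traj f (m + n) y = ptraj f m n (traj f m y)
  | 0, _ => rfl
  | (n + 1), y => by
    show f (m + n + 1) (traj f (m + n) y) = f (m + n + 1) (ptraj f m n (traj f m y))
    rw [traj_add_S f m n y]

lemma ptraj_add (f : ℕ → X → X) (r n : ℕ) :
    ∀ i y, ptraj f r (n + i) y = ptraj f (r + n) i (ptraj f r n y)
  | 0, _ => rfl
  | (i + 1), y => by
    show f (r + (n + i) + 1) (ptraj f r (n + i) y)
        = f (r + n + i + 1) (ptraj f (r + n) i (ptraj f r n y))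
    rw [ptraj_add f r n i y]
    have h : r + (n + i) + 1 = r + n + i + 1 := by omega
    rw [h]

lemma ptraj_period {f : ℕ → X → X} {p : ℕ} (hper : PeriodicFam f p) (m : ℕ) :
    ∀ n y, ptraj f (m + p) n y = ptraj f m n y
  | 0, _ => rfl
  | (n + 1), y => by
    show f (m + p + n + 1) (ptraj f (m + p) n y) = f (m + n + 1) (ptraj f m n y)
    rw [ptraj_period hper m n y]
    have h : m + p + n + 1 = (m + n + 1) + p := by omega
    rw [h, hper (m + n + 1)]

lemma ptraj_zero_shift (f : ℕ → X → X) :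
    ∀ n y, ptraj f 0 n y = traj f n y
  | 0, _ => rfl
  | (n + 1), y => by
    show f (0 + n + 1) (ptraj f 0 n y) = f (n + 1) (traj f n y)
    rw [ptraj_zero_shift f n y]
    have h : 0 + n + 1 = n + 1 := by omega
    rw [h]

lemma ptraj_mul {f : ℕ → X → X} {p : ℕ} (hper : PeriodicFam f p) (k n : ℕ) (y : X) :
    ptraj f (k * p) n y = traj f n y := by
  induction k with
  | zero => rw [Nat.zero_mul]; exact ptraj_zero_shift f n y
  | succ k ih =>
    have h : (k + 1) * p = k * p + p := by ring
    rw [h, ptraj_period hper (k * p) n y, ih]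

lemma ptraj_mul_add {f : ℕ → X → X} {p : ℕ} (hper : PeriodicFam f p) (k r n : ℕ) (y : X) :
    ptraj f (k * p + r) n y = ptraj f r n y := by
  induction k with
  | zero => rw [Nat.zero_mul, Nat.zero_add]
  | succ k ih =>
    have h : (k + 1) * p + r = (k * p + r) + p := by ring
    rw [h, ptraj_period hper (k * p + r) n y, ih]

lemma traj_mul_p {f : ℕ → X → X} {p : ℕ} (hper : PeriodicFam f p) (k : ℕ) (y : X) :
    traj f (k * p) y = (traj f p)^[k] y := by
  induction k with
  | zero => rw [Nat.zero_mul]; rfl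
  | succ k ih =>
    have h : (k + 1) * p = k * p + p := by ring
    rw [h, traj_add_S f (k * p) p y, ptraj_mul hper k p (traj f (k * p) y), ih,
      Function.iterate_succ_apply']

/-- `V` is a `μ`-stable set for the system shifted by `m`. -/
def Stb [UniformSpace X] (f : ℕ → X → X) (m : ℕ) (μ : Set (X × X)) (V : Set X) : Prop :=
  ∀ y ∈ V, ∀ y' ∈ V, ∀ n, (ptraj f m n y, ptraj f m n y') ∈ μ

lemma mem_of_comp [UniformSpace X] {ν E : Set (X × X)} (hν : ν ∈ 𝓤 X)
    (h : ν ○ ν ⊆ E) : ν ⊆ E := by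
  rintro ⟨a, b⟩ hq
  exact h (SetRel.prodMk_mem_comp (refl_mem_uniformity hν) hq)

/-- An equicontinuity point has an open `ν`-stable neighbourhood for every entourage `ν`. -/
lemma eqPt_stable_nbhd [UniformSpace X] {f : ℕ → X → X} {z : X} (hz : EqPt f z)
    {ν : Set (X × X)} (hν : ν ∈ 𝓤 X) :
    ∃ V : Set X, IsOpen V ∧ z ∈ V ∧ ∀ y ∈ V, ∀ y' ∈ V, ∀ n, (traj f n y, traj f n y') ∈ ν := by
  obtain ⟨ν', hν'u, hν's, hν'c⟩ := comp_symm_mem_uniformity_sets hν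
  obtain ⟨D, hD, hzD⟩ := hz ν' hν'u
  obtain ⟨D', ⟨hD'u, hD'o⟩, hD'D⟩ := uniformity_hasBasis_open.mem_iff.mp hD
  refine ⟨UniformSpace.ball z D', UniformSpace.isOpen_ball z hD'o,
    UniformSpace.mem_ball_self z hD'u, ?_⟩
  intro y hy y' hy' n
  have h1 : (traj f n z, traj f n y) ∈ ν' := hzD y (hD'D hy) n
  have h2 : (traj f n z, traj f n y') ∈ ν' := hzD y' (hD'D hy') n
  exact hν'c (SetRel.prodMk_mem_comp (hν's.symm _ _ h1) h2)

/-- Pull back a stable set along a partial trajectory. -/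
lemma stable_pullback [UniformSpace X] {f : ℕ → X → X} (hf : ∀ n, Continuous (f n))
    {E₁ ν : Set (X × X)} (hνu : ν ∈ 𝓤 X) (hνo : IsOpen ν) (hνs : SetRel.IsSymm ν)
    (hνE : ν ○ ν ⊆ E₁) {r n : ℕ} {V : Set X} (hVo : IsOpen V) (hVs : Stb f (r + n) ν V)
    {u : X} (hu : ptraj f r n u ∈ V) :
    ∃ V' : Set X, IsOpen V' ∧ u ∈ V' ∧ Stb f r E₁ V' := by
  have hcont : ∀ j, Continuous (ptraj f r j) := ptraj_cont hf r
  refine ⟨(ptraj f r n) ⁻¹' V ∩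
      ⋂ j ∈ Finset.range n, (ptraj f r j) ⁻¹' (UniformSpace.ball (ptraj f r j u) ν),
      ?_, ?_, ?_⟩
  · exact (hVo.preimage (hcont n)).inter (isOpen_biInter_finset fun j _ =>
      (UniformSpace.isOpen_ball _ hνo).preimage (hcont j))
  · exact ⟨hu, Set.mem_iInter₂.mpr fun j _ => UniformSpace.mem_ball_self _ hνu⟩
  · intro y hy y' hy' m
    rcases lt_or_ge m n with hmn | hnm
    · have h1 : (ptraj f r m u, ptraj f r m y) ∈ ν :=
        Set.mem_iInter₂.mp hy.2 m (Finset.mem_range.mpr hmn)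
      have h2 : (ptraj f r m u, ptraj f r m y') ∈ ν :=
        Set.mem_iInter₂.mp hy'.2 m (Finset.mem_range.mpr hmn)
      exact hνE (SetRel.prodMk_mem_comp (hνs.symm _ _ h1) h2)
    · obtain ⟨i, rfl⟩ := Nat.exists_eq_add_of_le hnm
      rw [ptraj_add f r n i y, ptraj_add f r n i y']
      exact mem_of_comp hνu hνE (hVs _ hy.1 _ hy'.1 i)

/-- If some orbit point of `x` lies in a stable set matching its own time, then `x`
satisfies the equicontinuity estimate for `E`. -/
lemma eq_at_final [UniformSpace X] {f : ℕ → X → X} (hf : ∀ n, Continuous (f n))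
    {E E₁ : Set (X × X)} (hE₁u : E₁ ∈ 𝓤 X) (hE₁o : IsOpen E₁) (hE₁E : E₁ ⊆ E)
    {x : X} {m : ℕ} {V : Set X} (hVo : IsOpen V) (hVs : Stb f m E₁ V)
    (hxV : traj f m x ∈ V) :
    ∃ D ∈ 𝓤 X, ∀ y : X, (x, y) ∈ D → ∀ n : ℕ, (traj f n x, traj f n y) ∈ E := by
  have hcontm : ∀ j, Continuous (traj f j) := traj_cont hf
  have hWo : IsOpen ((traj f m) ⁻¹' V ∩
      ⋂ j ∈ Finset.range m, (traj f j) ⁻¹' (UniformSpace.ball (traj f j x) E₁)) :=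
    (hVo.preimage (hcontm m)).inter (isOpen_biInter_finset fun j _ =>
      (UniformSpace.isOpen_ball _ hE₁o).preimage (hcontm j))
  have hxW : x ∈ (traj f m) ⁻¹' V ∩
      ⋂ j ∈ Finset.range m, (traj f j) ⁻¹' (UniformSpace.ball (traj f j x) E₁) :=
    ⟨hxV, Set.mem_iInter₂.mpr fun j _ => UniformSpace.mem_ball_self _ hE₁u⟩
  have hWnhds := hWo.mem_nhds hxW
  rw [UniformSpace.mem_nhds_iff] at hWnhds
  obtain ⟨D, hD, hDW⟩ := hWnhds
  refine ⟨D, hD, fun y hy n => ?_⟩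
  have hyW := hDW hy
  rcases lt_or_ge n m with hnm | hmn
  · have h1 : (traj f n x, traj f n y) ∈ E₁ :=
      Set.mem_iInter₂.mp hyW.2 n (Finset.mem_range.mpr hnm)
    exact hE₁E h1
  · obtain ⟨i, rfl⟩ := Nat.exists_eq_add_of_le hmn
    rw [traj_add_S f m i x, traj_add_S f m i y]
    exact hE₁E (hVs _ hxV _ hyW.1 i)

lemma open_diff_finset_nonempty [TopologicalSpace X] [T1Space X]
    (hiso : ∀ x : X, (𝓝[≠] x).NeBot) {O : Set X} (hO : IsOpen O) (hne : O.Nonempty)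
    (s : Finset X) : (O \ (s : Set X)).Nonempty := by
  classical
  induction s using Finset.induction_on with
  | empty => simpa using hne
  | @insert a t hat ih =>
    obtain ⟨w, hwO, hwt⟩ := ih
    have hOt : IsOpen (O \ (t : Set X)) := hO.sdiff t.finite_toSet.isClosed
    by_cases hwa : w = a
    · subst hwa
      have h1 : (O \ (t : Set X)) ∈ 𝓝[≠] w := nhdsWithin_le_nhds (hOt.mem_nhds ⟨hwO, hwt⟩)
      have h2 : ((O \ (t : Set X)) ∩ {w}ᶜ) ∈ 𝓝[≠] w :=
        Filter.inter_mem h1 self_mem_nhdsWithin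
      haveI := hiso w
      obtain ⟨v, ⟨hvO, hvt⟩, hvw⟩ := Filter.nonempty_of_mem h2
      refine ⟨v, hvO, ?_⟩
      rw [Finset.coe_insert, Set.mem_insert_iff]
      push_neg
      exact ⟨Set.mem_compl_singleton_iff.mp hvw, hvt⟩
    · refine ⟨w, hwO, ?_⟩
      rw [Finset.coe_insert, Set.mem_insert_iff]
      push_neg
      exact ⟨hwa, hwt⟩

lemma dense_orbit_hits [TopologicalSpace X] [T1Space X]
    (hiso : ∀ x : X, (𝓝[≠] x).NeBot) {g : X → X} {x₀ : X}
    (hx₀ : Dense (Set.range fun k => g^[k] x₀)) {O : Set X} (hO : IsOpen O)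
    (hne : O.Nonempty) (N : ℕ) : ∃ K, N ≤ K ∧ g^[K] x₀ ∈ O := by
  classical
  set F : Finset X := (Finset.range N).image (fun i => g^[i] x₀) with hF
  have hne2 : (O \ (F : Set X)).Nonempty := open_diff_finset_nonempty hiso hO hne F
  have hop : IsOpen (O \ (F : Set X)) := hO.sdiff F.finite_toSet.isClosed
  obtain ⟨w, hws, hwU⟩ := hx₀.exists_mem_open hop hne2
  obtain ⟨K, rfl⟩ := hws
  refine ⟨K, ?_, hwU.1⟩
  by_contra hlt
  push_neg at hlt
  exact hwU.2 (by
    rw [hF]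
    exact_mod_cast Finset.mem_coe.mpr
      (Finset.mem_image.mpr ⟨K, Finset.mem_range.mpr hlt, rfl⟩))

lemma dense_biInter_finset_open [TopologicalSpace X] {ι : Type*} (s : Finset ι)
    {O : ι → Set X} :
    (∀ i ∈ s, IsOpen (O i)) → (∀ i ∈ s, Dense (O i)) → Dense (⋂ i ∈ s, O i) := by
  classical
  induction s using Finset.induction_on with
  | empty => intro _ _; simp [dense_univ]
  | @insert a t hat ih =>
    intro ho hd
    rw [Finset.set_biInter_insert]
    exact (hd a (Finset.mem_insert_self a t)).inter_of_isOpen_left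
      (ih (fun i hi => ho i (Finset.mem_insert_of_mem hi))
        (fun i hi => hd i (Finset.mem_insert_of_mem hi)))
      (ho a (Finset.mem_insert_self a t))

end TransEqAuxSection
theorem transPt_mem_eqPts {X : Type*} [UniformSpace X] [T2Space X]
    (hiso : ∀ x : X, (𝓝[≠] x).NeBot)
    (f : ℕ → X → X) (hf : ∀ n, Continuous (f n))
    (p : ℕ) (hp : 0 < p) (hper : PeriodicFam f p)
    (htrans : ∃ x, TransPtAut (traj f p) x)
    (heq : ∃ z, EqPt f z) :
    ∀ x : X, TransPt f x → EqPt f x := by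
  classical
  obtain ⟨x₀, hx₀⟩ := htrans
  obtain ⟨z, hz⟩ := heq
  intro x hx E hE
  haveI : Nonempty X := ⟨x⟩
  -- entourages
  obtain ⟨E₁, hE₁u, hE₁o, hE₁s, hE₁E⟩ := comp_open_symm_mem_uniformity_sets hE
  have hE₁sub : E₁ ⊆ E := mem_of_comp hE₁u hE₁E
  obtain ⟨ν, hνu, hνo, hνs, hνE₁⟩ := comp_open_symm_mem_uniformity_sets hE₁u
  -- a ν-stable open neighbourhood of z
  obtain ⟨Vz, hVzo, hzVz, hVzs⟩ := eqPt_stable_nbhd hz hνu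
  -- the phase classes of the orbit of x
  set A : ℕ → Set X := fun r => Set.range (fun k : ℕ => traj f (k * p + r) x) with hA
  -- the closures of the phase classes cover X
  have hcov : ∀ w : X, ∃ r, r < p ∧ w ∈ closure (A r) := by
    intro w
    have hsub : (Set.range fun n => traj f n x) ⊆ ⋃ r ∈ Finset.range p, A r := by
      rintro _ ⟨n, rfl⟩
      refine Set.mem_biUnion (Finset.mem_range.mpr (Nat.mod_lt n hp)) ?_
      refine ⟨n / p, ?_⟩
      show traj f (n / p * p + n % p) x = traj f n x
      rw [Nat.div_add_mod']
    have hcl : closure (⋃ r ∈ Finset.range p, A r) ⊆ ⋃ r ∈ Finset.range p, closure (A r) :=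
      closure_minimal (Set.iUnion₂_mono fun r _ => subset_closure)
        (Set.Finite.isClosed_biUnion (Finset.finite_toSet _) fun r _ => isClosed_closure)
    have hw : w ∈ closure (⋃ r ∈ Finset.range p, A r) := closure_mono hsub (hx w)
    obtain ⟨r, hr, hmem⟩ := Set.mem_iUnion₂.mp (hcl hw)
    exact ⟨r, Finset.mem_range.mp hr, hmem⟩
  -- some phase class is somewhere dense
  have hint : ∃ r, r < p ∧ (interior (closure (A r))).Nonempty := by
    by_contra hcon
    have hcon' : ∀ r, r < p → interior (closure (A r)) = ∅ := by
      intro r hr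
      by_contra h2
      exact hcon ⟨r, hr, Set.nonempty_iff_ne_empty.mpr h2⟩
    have hdense : Dense (⋂ r ∈ Finset.range p, (closure (A r))ᶜ) := by
      refine dense_biInter_finset_open _ (fun r _ => isClosed_closure.isOpen_compl) ?_
      intro r hr
      exact interior_eq_empty_iff_dense_compl.mp (hcon' r (Finset.mem_range.mp hr))
    obtain ⟨w, hw⟩ := hdense.nonempty
    obtain ⟨r, hrp, hmem⟩ := hcov w
    exact (Set.mem_iInter₂.mp hw r (Finset.mem_range.mpr hrp)) hmem
  obtain ⟨r, hrp, u₀, hu₀⟩ := hint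
  -- the closure of the phase class is inside the closure of traj f r of the g-orbit of x₀
  have hAr_sub : closure (A r)
      ⊆ closure (traj f r '' (Set.range fun k => (traj f p)^[k] x₀)) := by
    apply closure_minimal _ isClosed_closure
    rintro _ ⟨k, rfl⟩
    show traj f (k * p + r) x ∈ closure (traj f r '' (Set.range fun k => (traj f p)^[k] x₀))
    have hdecomp : traj f (k * p + r) x = traj f r (traj f (k * p) x) := by
      rw [traj_add_S f (k * p) r x, ptraj_mul hper k r (traj f (k * p) x)]
    rw [hdecomp]
    have hv : traj f (k * p) x ∈ closure (Set.range fun k => (traj f p)^[k] x₀) :=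
      hx₀ (traj f (k * p) x)
    exact image_closure_subset_closure_image (traj_cont hf r) ⟨_, hv, rfl⟩
  -- pick a point traj f r ((traj f p)^[i] x₀) in the interior
  have hu₀cl : u₀ ∈ closure (traj f r '' (Set.range fun k => (traj f p)^[k] x₀)) :=
    hAr_sub (interior_subset hu₀)
  obtain ⟨q, hqU, hqimg⟩ :=
    _root_.mem_closure_iff.mp hu₀cl (interior (closure (A r))) isOpen_interior hu₀
  obtain ⟨v, ⟨i, rfl⟩, rfl⟩ := hqimg
  -- the g-orbit of x₀ hits Vz at a late time
  obtain ⟨K, hKi, hKVz⟩ := dense_orbit_hits hiso hx₀ hVzo ⟨z, hzVz⟩ (i + 1)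
  have hk1 : 1 ≤ K - i := by omega
  have hpk : p ≤ (K - i) * p := Nat.le_mul_of_pos_left p hk1
  have hrn : r + ((K - i) * p - r) = (K - i) * p := by omega
  -- the shifted trajectory of our point enters Vz with matching phase
  have hSu : ptraj f r ((K - i) * p - r) (traj f r ((traj f p)^[i] x₀)) ∈ Vz := by
    have h1 : ptraj f r ((K - i) * p - r) (traj f r ((traj f p)^[i] x₀))
        = traj f (r + ((K - i) * p - r)) ((traj f p)^[i] x₀) :=
      (traj_add_S f r ((K - i) * p - r) ((traj f p)^[i] x₀)).symm
    rw [h1, hrn, traj_mul_p hper (K - i) ((traj f p)^[i] x₀),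
      ← Function.iterate_add_apply]
    have h2 : K - i + i = K := by omega
    rw [h2]
    exact hKVz
  -- Vz is ν-stable for the shift r + n
  have hVzs' : Stb f (r + ((K - i) * p - r)) ν Vz := by
    rw [hrn]
    intro y hy y' hy' m
    rw [ptraj_mul hper (K - i) m y, ptraj_mul hper (K - i) m y']
    exact hVzs y hy y' hy' m
  -- pull back to an E₁-stable open neighbourhood for shift r
  obtain ⟨V', hV'o, huV', hV's⟩ := stable_pullback hf hνu hνo hνs hνE₁ hVzo hVzs' hSu
  -- an actual orbit point of x of phase r lies in this stable set
  have hqcl : traj f r ((traj f p)^[i] x₀) ∈ closure (A r) := interior_subset hqU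
  obtain ⟨a, ⟨haU, haV'⟩, haA⟩ := _root_.mem_closure_iff.mp hqcl
    (interior (closure (A r)) ∩ V') (isOpen_interior.inter hV'o) ⟨hqU, huV'⟩
  obtain ⟨j, hj⟩ := haA
  have hj' : traj f (j * p + r) x = a := hj
  -- conclude
  have hstb : Stb f (j * p + r) E₁ V' := by
    intro y hy y' hy' m
    rw [ptraj_mul_add hper j r m y, ptraj_mul_add hper j r m y']
    exact hV's y hy y' hy' m
  have hxV' : traj f (j * p + r) x ∈ V' := by rw [hj']; exact haV'
  exact eq_at_final hf hE₁u hE₁o hE₁sub hV'o hstb hxV'
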